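/- Let X~ in R^{n x d} have full row rank with minimum singular value sigma_min > 0, let u in R^d, b = (-X~ u)_+, and suppose w~ minimizes (1/2)||(b - X~ w)_+||_2^2 + rho ||w||_2 for rho >= 0. Then the constraint violations of w~ and v~ = u + w~ satisfy ||(X~ w~)_-||_2 <= rho / sigma_min and ||(X~ v~)_-||_2 <= rho / sigma_min, where (z)_- denotes the componentwise negative part. -/
import Mathlib

open Matrix

/-- Euclidean norm on `Fin k → ℝ`. -/
noncomputable def norm2 {k : ℕ} (v : Fin k → ℝ) : ℝ := Real.sqrt (∑ i, v i ^ 2)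

lemma norm2_nonneg {k : ℕ} (v : Fin k → ℝ) : 0 ≤ norm2 v := Real.sqrt_nonneg _

lemma norm2_sq {k : ℕ} (v : Fin k → ℝ) : norm2 v ^ 2 = ∑ i, v i ^ 2 := by
  rw [norm2, Real.sq_sqrt]
  exact Finset.sum_nonneg fun i _ => sq_nonneg _

lemma norm2_mono {k : ℕ} {a c : Fin k → ℝ} (h : ∀ i, a i ^ 2 ≤ c i ^ 2) :
    norm2 a ≤ norm2 c :=
  Real.sqrt_le_sqrt (Finset.sum_le_sum fun i _ => h i)

lemma norm2_eq_norm {k : ℕ} (v : Fin k → ℝ) :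
    norm2 v = ‖(WithLp.equiv 2 (Fin k → ℝ)).symm v‖ := by
  rw [EuclideanSpace.norm_eq]
  simp [norm2, Real.norm_eq_abs, sq_abs]

lemma norm2_add_le {k : ℕ} (x y : Fin k → ℝ) : norm2 (x + y) ≤ norm2 x + norm2 y := by
  simp only [norm2_eq_norm]
  rw [show (WithLp.equiv 2 (Fin k → ℝ)).symm (x + y)
      = (WithLp.equiv 2 (Fin k → ℝ)).symm x + (WithLp.equiv 2 (Fin k → ℝ)).symm y from rfl]
  exact norm_add_le _ _

lemma norm2_smul {k : ℕ} (t : ℝ) (v : Fin k → ℝ) (ht : 0 ≤ t) :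
    norm2 (t • v) = t * norm2 v := by
  simp only [norm2, Pi.smul_apply, smul_eq_mul, mul_pow, ← Finset.mul_sum]
  rw [Real.sqrt_mul (sq_nonneg t), Real.sqrt_sq ht]

lemma max_sub_sq_le (z δ : ℝ) :
    (max (z - δ) 0) ^ 2 ≤ (max z 0) ^ 2 - 2 * δ * (max z 0) + δ ^ 2 := by
  rcases le_total (z - δ) 0 with h1 | h1 <;> rcases le_total z 0 with h2 | h2 <;>
    simp [max_eq_left, max_eq_right, h1, h2] <;> nlinarith

/-- Approximate cone decomposition bound: if `X̃` has full row rank with minimum singular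
value at least `σ > 0`, and `w̃` minimizes `(1/2)‖(b - X̃w)₊‖² + ρ‖w‖₂` with
`b = (-X̃u)₊`, then the constraint violations of `w̃` and `ṽ = u + w̃` satisfy
`‖(X̃w̃)₋‖₂ ≤ ρ/σ` and `‖(X̃ṽ)₋‖₂ ≤ ρ/σ`. -/
theorem approximate_cone_decomposition_bound {n d : ℕ} (Xt : Matrix (Fin n) (Fin d) ℝ)
    (σ : ℝ) (hσ : 0 < σ)
    (hfull : ∀ z : Fin n → ℝ, σ * norm2 z ≤ norm2 (Xtᵀ.mulVec z))
    (u : Fin d → ℝ) (b : Fin n → ℝ) (hb : ∀ i, b i = max (-(Xt.mulVec u i)) 0)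
    (ρ : ℝ) (hρ : 0 ≤ ρ)
    (wt : Fin d → ℝ)
    (hmin : ∀ w : Fin d → ℝ,
      1 / 2 * norm2 (fun i => max (b i - Xt.mulVec wt i) 0) ^ 2 + ρ * norm2 wt ≤
        1 / 2 * norm2 (fun i => max (b i - Xt.mulVec w i) 0) ^ 2 + ρ * norm2 w) :
    norm2 (fun i => max (-(Xt.mulVec wt i)) 0) ≤ ρ / σ ∧
    norm2 (fun i => max (-(Xt.mulVec (u + wt) i)) 0) ≤ ρ / σ := by
  set r : Fin n → ℝ := fun i => max (b i - Xt.mulVec wt i) 0 with hr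
  set g : Fin d → ℝ := Xtᵀ.mulVec r with hg
  have hrnn : ∀ i, 0 ≤ r i := fun i => le_max_right _ _
  have hbnn : ∀ i, 0 ≤ b i := fun i => by rw [hb i]; exact le_max_right _ _
  -- dot product identity
  have hdot : ∑ i, Xt.mulVec g i * r i = norm2 g ^ 2 := by
    rw [norm2_sq]
    simp only [Matrix.mulVec, dotProduct, Finset.sum_mul]
    rw [Finset.sum_comm]
    apply Finset.sum_congr rfl
    intro j _
    simp only [hg, Matrix.mulVec, dotProduct, Matrix.transpose_apply, pow_two,
      Finset.mul_sum, Finset.sum_mul]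
    exact Finset.sum_congr rfl fun i _ => Finset.sum_congr rfl fun x _ => by ring
  set A : ℝ := ∑ i, Xt.mulVec g i ^ 2 with hA
  have hAnn : 0 ≤ A := Finset.sum_nonneg fun i _ => sq_nonneg _
  -- key: for all t > 0, norm2 g ^ 2 ≤ ρ * norm2 g + t * (A / 2)
  have hkey : ∀ t : ℝ, 0 < t → norm2 g ^ 2 ≤ ρ * norm2 g + t * (A / 2) := by
    intro t ht
    have h1 := hmin (wt + t • g)
    have hmv : Xt.mulVec (wt + t • g) = fun i => Xt.mulVec wt i + t * Xt.mulVec g i := by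
      funext i
      rw [Matrix.mulVec_add, Matrix.mulVec_smul]
      rfl
    have h2 : norm2 (fun i => max (b i - Xt.mulVec (wt + t • g) i) 0) ^ 2 ≤
        norm2 r ^ 2 - 2 * t * norm2 g ^ 2 + t ^ 2 * A := by
      rw [norm2_sq, norm2_sq, hA]
      have hpt : ∀ i, (max (b i - Xt.mulVec (wt + t • g) i) 0) ^ 2 ≤
          r i ^ 2 - 2 * (t * Xt.mulVec g i) * r i + (t * Xt.mulVec g i) ^ 2 := by
        intro i
        have := max_sub_sq_le (b i - Xt.mulVec wt i) (t * Xt.mulVec g i)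
        rw [hmv]
        simpa [hr, sub_sub] using this
      calc ∑ i, (max (b i - Xt.mulVec (wt + t • g) i) 0) ^ 2
          ≤ ∑ i, (r i ^ 2 - 2 * (t * Xt.mulVec g i) * r i + (t * Xt.mulVec g i) ^ 2) :=
            Finset.sum_le_sum fun i _ => hpt i
        _ = ∑ i, (r i ^ 2 - 2 * t * (Xt.mulVec g i * r i) + t ^ 2 * Xt.mulVec g i ^ 2) :=
            Finset.sum_congr rfl fun i _ => by ring
        _ = ∑ i, r i ^ 2 - 2 * t * ∑ i, Xt.mulVec g i * r i
              + t ^ 2 * ∑ i, Xt.mulVec g i ^ 2 := by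
            rw [Finset.sum_add_distrib, Finset.sum_sub_distrib, ← Finset.mul_sum,
              ← Finset.mul_sum]
        _ = ∑ i, r i ^ 2 - 2 * t * norm2 g ^ 2 + t ^ 2 * ∑ i, Xt.mulVec g i ^ 2 := by
            rw [hdot]
    have h3 : norm2 (wt + t • g) ≤ norm2 wt + t * norm2 g := by
      calc norm2 (wt + t • g) ≤ norm2 wt + norm2 (t • g) := norm2_add_le _ _
        _ = norm2 wt + t * norm2 g := by rw [norm2_smul _ _ ht.le]
    nlinarith [norm2_nonneg g]
  have hgle : norm2 g ≤ ρ := by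
    have h4 : norm2 g ^ 2 ≤ ρ * norm2 g := by
      apply le_of_forall_pos_le_add
      intro ε hε
      have := hkey (2 * ε / (A + 1)) (by positivity)
      have hA1 : (2 * ε / (A + 1)) * (A / 2) ≤ ε := by
        rw [div_mul_eq_mul_div, div_le_iff₀ (by linarith)]
        nlinarith
      linarith
    rcases eq_or_lt_of_le (norm2_nonneg g) with h | h
    · linarith [h.symm]
    · nlinarith
  have hrle : norm2 r ≤ ρ / σ := by
    rw [le_div_iff₀ hσ, mul_comm]
    exact le_trans (hfull r) hgle
  constructor
  · refine le_trans (norm2_mono fun i => ?_) hrle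
    have h1 : max (-(Xt.mulVec wt i)) 0 ≤ r i := by
      apply max_le _ (hrnn i)
      exact le_trans (by linarith [hbnn i]) (le_max_left _ _)
    exact pow_le_pow_left₀ (le_max_right _ _) h1 2
  · refine le_trans (norm2_mono fun i => ?_) hrle
    have h1 : max (-(Xt.mulVec (u + wt) i)) 0 ≤ r i := by
      apply max_le _ (hrnn i)
      have : -(Xt.mulVec (u + wt) i) ≤ b i - Xt.mulVec wt i := by
        rw [Matrix.mulVec_add, hb i]
        have := le_max_left (-(Xt.mulVec u i)) 0
        simp only [Pi.add_apply]
        linarith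
      exact le_trans this (le_max_left _ _)
    exact pow_le_pow_left₀ (le_max_right _ _) h1 2
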